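/- arXiv:1909.03763 — 3 statements merged into one kernel-verified Lean document; each statement's English description precedes it below -/
import Mathlib

section
/- Let X and Θ be compact metric spaces and f : X × Θ → ℝ^p a continuous function such that for every θ ∈ Θ the image {f(x,θ) : x ∈ X} spans ℝ^p. Then there exist finitely many points x₁,…,x_m ∈ X such that for every θ ∈ Θ the vectors f(x₁,θ),…,f(x_m,θ) span ℝ^p. -/
theorem stmt0 {X Θ : Type*} [MetricSpace X] [CompactSpace X]
    [MetricSpace Θ] [CompactSpace Θ] {p : ℕ} (hp : 1 ≤ p)
    (f : X × Θ → EuclideanSpace ℝ (Fin p)) (hf : Continuous f)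
    (hspan : ∀ θ : Θ, Submodule.span ℝ (Set.range fun x : X => f (x, θ)) = ⊤) :
    ∃ (m : ℕ) (xs : Fin m → X), ∀ θ : Θ,
      Submodule.span ℝ (Set.range fun i : Fin m => f (xs i, θ)) = ⊤ := by
  haveI : Nonempty (Fin p) := ⟨⟨0, hp⟩⟩
  -- Step 1: for each θ₀, find p points whose images at θ₀ are linearly independent
  have key : ∀ θ₀ : Θ, ∃ xs : Fin p → X,
      LinearIndependent ℝ (fun i : Fin p => f (xs i, θ₀)) := by
    intro θ₀
    obtain ⟨s, hsub, hspan', hli⟩ :=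
      exists_linearIndependent ℝ (Set.range fun x : X => f (x, θ₀))
    have hspan'' : ⊤ ≤ Submodule.span ℝ (Set.range ((↑) : s → EuclideanSpace ℝ (Fin p))) := by
      rw [Subtype.range_coe, hspan', hspan θ₀]
    let b : Module.Basis s ℝ (EuclideanSpace ℝ (Fin p)) := Module.Basis.mk hli hspan''
    haveI : Fintype s := FiniteDimensional.fintypeBasisIndex b
    have hcard : Fintype.card (Fin p) = Fintype.card s := by
      rw [Fintype.card_fin]
      exact (finrank_euclideanSpace_fin (𝕜 := ℝ) (n := p)).symm.trans
        (Module.finrank_eq_card_basis b)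
    let e : Fin p ≃ s := Fintype.equivOfCardEq hcard
    refine ⟨fun i => (hsub (e i).2).choose, ?_⟩
    have heq : (fun i : Fin p => f ((hsub (e i).2).choose, θ₀)) = fun i => (↑(e i) : EuclideanSpace ℝ (Fin p)) := by
      funext i
      exact (hsub (e i).2).choose_spec
    rw [heq]
    exact hli.comp e e.injective
  choose xs hxs using key
  -- Step 2: open cover
  let U : Θ → Set Θ := fun θ₀ => {θ | LinearIndependent ℝ (fun i : Fin p => f (xs θ₀ i, θ))}
  have hUopen : ∀ θ₀, IsOpen (U θ₀) := by
    intro θ₀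
    have hc : Continuous fun θ : Θ => fun i : Fin p => f (xs θ₀ i, θ) :=
      continuous_pi fun i => hf.comp (continuous_const.prodMk continuous_id)
    exact isOpen_setOf_linearIndependent.preimage hc
  have hcover : (Set.univ : Set Θ) ⊆ ⋃ θ₀, U θ₀ := fun θ _ =>
    Set.mem_iUnion.2 ⟨θ, hxs θ⟩
  obtain ⟨t, ht⟩ := isCompact_univ.elim_finite_subcover U hUopen hcover
  -- Step 3: concatenate
  let ι := t × Fin p
  let m := Fintype.card ι
  let e : Fin m ≃ ι := (Fintype.equivFin ι).symm
  refine ⟨m, fun i => xs ((e i).1 : Θ) (e i).2, fun θ => ?_⟩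
  obtain ⟨θ₀, hθ₀t, hθU⟩ := Set.mem_iUnion₂.1 (ht (Set.mem_univ θ))
  have hli : LinearIndependent ℝ (fun i : Fin p => f (xs θ₀ i, θ)) := hθU
  have hsp : Submodule.span ℝ (Set.range fun i : Fin p => f (xs θ₀ i, θ)) = ⊤ :=
    hli.span_eq_top_of_card_eq_finrank (by simp [finrank_euclideanSpace_fin])
  rw [eq_top_iff, ← hsp]
  apply Submodule.span_mono
  rintro _ ⟨i, rfl⟩
  exact ⟨e.symm (⟨θ₀, hθ₀t⟩, i), by simp⟩
end

section
/- Let (β_n)_{n ≥ n_st} be a sequence in [0,1] and let 0 < β < β̃ ≤ 1 with β̃ − β ≥ 1/m for some positive integer m ≥ n_st. Suppose for all n ≥ n_st: if β_n > β then β_{n+1} = (n/(n+1)) β_n, and if β_n ≤ β then β_{n+1} ≤ β_n + 1/(n+1). Then there exists n₀ (depending only on β, β̃, n_st) such that β_n ≤ β̃ for all n ≥ n₀; explicitly one may take n₀ = ⌈1/β⌉ · max{n_st, ⌈1/(β̃ − β)⌉}. -/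
theorem stmt4 (nst : ℕ) (hnst : 1 ≤ nst) (β : ℕ → ℝ)
    (hrange : ∀ n, nst ≤ n → β n ∈ Set.Icc (0 : ℝ) 1)
    (b bt : ℝ) (hb : 0 < b) (hbbt : b < bt) (hbt1 : bt ≤ 1)
    (m : ℕ) (hm : nst ≤ m) (hm' : (1 : ℝ) / m ≤ bt - b)
    (hrec1 : ∀ n, nst ≤ n → b < β n → β (n + 1) = (n / (n + 1) : ℝ) * β n)
    (hrec2 : ∀ n, nst ≤ n → β n ≤ b → β (n + 1) ≤ β n + 1 / (n + 1)) :
    ∀ n, ⌈(1 : ℝ) / b⌉₊ * max nst ⌈(1 : ℝ) / (bt - b)⌉₊ ≤ n → β n ≤ bt := by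
  intro n hn
  set K := ⌈(1 : ℝ) / b⌉₊ with hKdef
  set M := max nst ⌈(1 : ℝ) / (bt - b)⌉₊ with hMdef
  have hbtb : (0 : ℝ) < bt - b := by linarith
  have hMnst : nst ≤ M := le_max_left _ _
  have hM1 : 1 ≤ M := le_trans hnst hMnst
  have hMpos : (0 : ℝ) < M := by exact_mod_cast hM1
  have hK1 : 1 ≤ K := Nat.ceil_pos.mpr (by positivity)
  have hKpos : (0 : ℝ) < K := by exact_mod_cast hK1
  have hMb : (1 : ℝ) / M ≤ bt - b := by
    have h1 : (1 : ℝ) / (bt - b) ≤ M := by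
      refine le_trans (Nat.le_ceil _) ?_
      exact_mod_cast le_max_right nst _
    rw [div_le_iff₀ hbtb] at h1
    rw [div_le_iff₀ hMpos]
    linarith
  have hKb : (1 : ℝ) / K ≤ b := by
    have h1 : (1 : ℝ) / b ≤ K := Nat.le_ceil _
    rw [div_le_iff₀ hb] at h1
    rw [div_le_iff₀ hKpos]
    linarith
  -- preservation lemma
  have hpres : ∀ k, M ≤ k → β k ≤ bt → β (k + 1) ≤ bt := by
    intro k hk hβ
    have hknst : nst ≤ k := hMnst.trans hk
    by_cases h : b < β k
    · rw [hrec1 k hknst h]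
      have h0 : 0 ≤ β k := (hrange k hknst).1
      have hfrac : (k : ℝ) / (k + 1) ≤ 1 := by
        rw [div_le_one (by positivity)]; linarith
      nlinarith
    · push_neg at h
      have h2 := hrec2 k hknst h
      have hkM : (M : ℝ) ≤ k := by exact_mod_cast hk
      have h3 : (1 : ℝ) / (k + 1) ≤ 1 / M := by
        apply one_div_le_one_div_of_le hMpos
        linarith
      linarith
  have hstep : ∀ k, M ≤ k → β k ≤ bt → ∀ j, k ≤ j → β j ≤ bt := by
    intro k hk hβ j hj
    induction j, hj using Nat.le_induction with
    | base => exact hβ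
    | succ j hj ih => exact hpres j (hk.trans hj) ih
  -- telescoping
  have htel : ∀ d, (∀ j, M ≤ j → j < M + d → b < β j) →
      ((M : ℝ) + d) * β (M + d) = (M : ℝ) * β M := by
    intro d
    induction d with
    | zero => simp
    | succ d ih =>
      intro h
      have h' : ∀ j, M ≤ j → j < M + d → b < β j := fun j hj hj' => h j hj (by omega)
      have hb' : b < β (M + d) := h _ (Nat.le_add_right _ _) (by omega)
      have hr := hrec1 (M + d) (hMnst.trans (Nat.le_add_right _ _)) hb'
      have hMd : (0 : ℝ) < (M : ℝ) + d + 1 := by positivity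
      have key : ((M : ℝ) + d + 1) * β (M + d + 1) = ((M : ℝ) + d) * β (M + d) := by
        rw [hr]; push_cast; field_simp
      have ih' := ih h'
      show ((M : ℝ) + ↑(d + 1)) * β (M + d + 1) = (M : ℝ) * β M
      push_cast
      linarith [key, ih']
  have hMKM : M ≤ K * M := Nat.le_mul_of_pos_left M hK1
  have hKMn : K * M ≤ n := hn
  have hKM : β (K * M) ≤ bt := by
    by_cases hex : ∃ j, M ≤ j ∧ j < K * M ∧ β j ≤ b
    · obtain ⟨j, hj1, hj2, hj3⟩ := hex
      exact hstep j hj1 (hj3.trans hbbt.le) (K * M) hj2.le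
    · push_neg at hex
      have hd : M + (K * M - M) = K * M := by omega
      have H := htel (K * M - M) (by
        intro j hj hj'
        exact hex j hj (by omega))
      rw [hd] at H
      have hcast : (M : ℝ) + ((K * M - M : ℕ) : ℝ) = ((K * M : ℕ) : ℝ) := by
        exact_mod_cast congrArg (Nat.cast : ℕ → ℝ) hd
      rw [hcast] at H
      have hβM1 : β M ≤ 1 := (hrange M hMnst).2
      have hβM0 : 0 ≤ β M := (hrange M hMnst).1
      have hKMcast : ((K * M : ℕ) : ℝ) = (K : ℝ) * M := by push_cast; ring
      have hbK : 1 ≤ b * K := by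
        rw [div_le_iff₀ hKpos] at hKb; linarith
      rw [hKMcast] at H
      nlinarith [mul_pos hKpos hMpos]
  exact hstep (K * M) hMKM hKM n hKMn
end

section
/- Let X be a compact metric space, p ≥ 2 an integer, and let (ξ_n)_{n ≥ n₀} be a sequence of probability measures on X such that for some d > 0 and ε > 0, ξ_n(S) ≤ 1/p + ε for every nonempty set S ⊆ X of diameter at most d and every n ≥ n₀. Set d₀ = d/3. Then there exists π₀ > 0 such that for each n ≥ n₀ there exist p subsets S_{1,n},…,S_{p,n} of X with ξ_n(S_{j,n}) ≥ π₀ for all j, diam(S_{j,n}) ≤ d₀ for all j, and dist(S_{j,n}, S_{k,n}) ≥ d₀ for all j < k, provided ε < 1/(p(p−1)). -/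
open MeasureTheory
open scoped ENNReal

theorem stmt5 {X : Type*} [MetricSpace X] [CompactSpace X]
    [MeasurableSpace X] [BorelSpace X]
    (p : ℕ) (hp : 2 ≤ p) (n₀ : ℕ) (ξ : ℕ → Measure X)
    (hprob : ∀ n, IsProbabilityMeasure (ξ n))
    (d ε : ℝ) (hd : 0 < d) (hε : 0 < ε) (hεsmall : ε < 1 / (p * (p - 1) : ℝ))
    (hsmall : ∀ n, n₀ ≤ n → ∀ S : Set X, S.Nonempty → Metric.diam S ≤ d →
      ξ n S ≤ ENNReal.ofReal (1 / p + ε)) :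
    ∃ π₀ > (0 : ℝ), ∀ n, n₀ ≤ n → ∃ S : Fin p → Set X,
      (∀ j, ENNReal.ofReal π₀ ≤ ξ n (S j)) ∧
      (∀ j, Metric.diam (S j) ≤ d / 3) ∧
      (∀ j k : Fin p, j < k → ∀ x ∈ S j, ∀ z ∈ S k, d / 3 ≤ dist x z) := by
  -- X is nonempty
  have hX : Nonempty X := by
    by_contra h
    have h1 : (ξ n₀) Set.univ = 1 := (hprob n₀).measure_univ
    rw [Set.univ_eq_empty_iff.mpr (not_nonempty_iff.mp h), measure_empty] at h1
    exact zero_ne_one h1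
  have hp2 : (2:ℝ) ≤ (p:ℝ) := by exact_mod_cast hp
  -- c > 0
  set c : ℝ := 1/p - (p-1)*ε with hc_def
  have hpc : (0:ℝ) < p := by linarith
  have hpc1 : (0:ℝ) < (p:ℝ) - 1 := by linarith
  have hc : 0 < c := by
    have h1 : ((p:ℝ)-1) * ε < ((p:ℝ)-1) * (1 / (p * (p-1))) :=
      mul_lt_mul_of_pos_left hεsmall hpc1
    have h2 : ((p:ℝ)-1) * (1 / (p * (p-1))) = 1/p := by
      field_simp
    rw [h2] at h1
    simp only [hc_def]
    linarith
  -- finite cover by balls of radius d/6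
  have hd6 : (0:ℝ) < d/6 := by linarith
  obtain ⟨t, ht⟩ := isCompact_univ.elim_finite_subcover
    (fun x : X => Metric.ball x (d/6)) (fun x => Metric.isOpen_ball)
    (fun x _ => Set.mem_iUnion.mpr ⟨x, Metric.mem_ball_self hd6⟩)
  have htne : t.Nonempty := by
    rcases hX with ⟨x⟩
    rcases Set.mem_iUnion₂.mp (ht (Set.mem_univ x)) with ⟨y, hy, _⟩
    exact ⟨y, hy⟩
  have hq : (0:ℝ) < t.card := by exact_mod_cast Finset.card_pos.mpr htne
  set π₀ : ℝ := c / t.card with hπ₀_def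
  have hπ₀ : 0 < π₀ := div_pos hc hq
  have hqπ : (t.card : ℝ) * π₀ = c := by
    rw [hπ₀_def]
    field_simp
  refine ⟨π₀, hπ₀, fun n hn => ?_⟩
  -- key inductive claim
  have key : ∀ j : ℕ, j ≤ p → ∃ S : Fin j → Set X,
      (∀ i, ENNReal.ofReal π₀ ≤ ξ n (S i)) ∧
      (∀ i, Metric.diam (S i) ≤ d / 3) ∧
      (∀ i k : Fin j, i < k → ∀ x ∈ S i, ∀ z ∈ S k, d / 3 ≤ dist x z) := by
    intro j
    induction j with
    | zero => exact fun _ => ⟨fun i => i.elim0, fun i => i.elim0, fun i => i.elim0, fun i => i.elim0⟩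
    | succ j ih =>
      intro hj
      obtain ⟨S, hSm, hSd, hSsep⟩ := ih (by omega)
      -- each S i is nonempty
      have hSne : ∀ i, (S i).Nonempty := by
        intro i
        refine MeasureTheory.nonempty_of_measure_ne_zero (μ := ξ n) (fun h0 => ?_)
        have h1 := hSm i
        rw [h0, le_zero_iff, ENNReal.ofReal_eq_zero] at h1
        exact absurd h1 (not_le.mpr hπ₀)
      set A : Set X := ⋃ i : Fin j, Metric.thickening (d/3) (S i) with hA_def
      -- measure of A is at most j * (1/p + ε)
      have hAm : ξ n A ≤ (j : ℝ≥0∞) * ENNReal.ofReal (1/p + ε) := by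
        calc ξ n A ≤ ∑ i : Fin j, ξ n (Metric.thickening (d/3) (S i)) :=
              measure_iUnion_fintype_le _ _
          _ ≤ ∑ _i : Fin j, ENNReal.ofReal (1/p + ε) := by
              refine Finset.sum_le_sum fun i _ => ?_
              refine hsmall n hn _ ((hSne i).mono (Metric.self_subset_thickening (by linarith) _)) ?_
              calc Metric.diam (Metric.thickening (d/3) (S i))
                  ≤ Metric.diam (S i) + 2 * (d/3) := Metric.diam_thickening_le _ (by linarith)
                _ ≤ d/3 + 2*(d/3) := by linarith [hSd i]
                _ = d := by ring
          _ = (j : ℝ≥0∞) * ENNReal.ofReal (1/p + ε) := by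
              simp [Finset.sum_const, nsmul_eq_mul]
      -- measure of complement at least c
      have hAc : ENNReal.ofReal c ≤ ξ n Aᶜ := by
        have h1 : (1:ℝ≥0∞) ≤ ξ n A + ξ n Aᶜ := by
          rw [← (hprob n).measure_univ, ← Set.union_compl_self A]
          exact measure_union_le _ _
        have hB : ξ n A ≤ ENNReal.ofReal (((p:ℝ)-1) * (1/p + ε)) := by
          refine hAm.trans ?_
          rw [ENNReal.ofReal_mul (by linarith)]
          refine mul_le_mul_left ?_ _
          rw [← ENNReal.ofReal_natCast j]
          exact ENNReal.ofReal_le_ofReal (by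
            have : (j:ℝ) ≤ (p:ℝ) - 1 := by
              have : j + 1 ≤ p := hj
              have : (j:ℝ) + 1 ≤ (p:ℝ) := by exact_mod_cast this
              linarith
            linarith)
        have h2 : (1:ℝ≥0∞) ≤ ENNReal.ofReal (((p:ℝ)-1) * (1/p + ε)) + ξ n Aᶜ :=
          h1.trans (add_le_add_left hB _)
        have h3 : ENNReal.ofReal (((p:ℝ)-1) * (1/p + ε)) + ENNReal.ofReal c = 1 := by
          rw [← ENNReal.ofReal_add (by positivity) (le_of_lt hc), ← ENNReal.ofReal_one]
          congr 1
          simp only [hc_def]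
          field_simp
          ring
        rw [← h3] at h2
        exact (ENNReal.add_le_add_iff_left ENNReal.ofReal_ne_top).mp h2
      -- find a good ball piece
      have hsum : ξ n Aᶜ ≤ ∑ x ∈ t, ξ n (Metric.ball x (d/6) ∩ Aᶜ) := by
        refine (measure_mono ?_).trans (measure_biUnion_finset_le t _)
        intro z hz
        rcases Set.mem_iUnion₂.mp (ht (Set.mem_univ z)) with ⟨y, hy, hzy⟩
        exact Set.mem_biUnion hy ⟨hzy, hz⟩
      obtain ⟨x₀, hx₀t, hmax⟩ := t.exists_max_image (fun x => ξ n (Metric.ball x (d/6) ∩ Aᶜ)) htne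
      have hx₀ : ENNReal.ofReal π₀ ≤ ξ n (Metric.ball x₀ (d/6) ∩ Aᶜ) := by
        by_contra hcon
        push_neg at hcon
        have hb : ξ n Aᶜ ≤ (t.card : ℝ≥0∞) * ξ n (Metric.ball x₀ (d/6) ∩ Aᶜ) := by
          refine hsum.trans ?_
          rw [← nsmul_eq_mul]
          exact Finset.sum_le_card_nsmul t _ _ hmax
        have hlt : (t.card : ℝ≥0∞) * ξ n (Metric.ball x₀ (d/6) ∩ Aᶜ)
            < (t.card : ℝ≥0∞) * ENNReal.ofReal π₀ := by
          refine ENNReal.mul_lt_mul_right ?_ (ENNReal.natCast_ne_top _) hcon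
          exact_mod_cast Finset.card_pos.mpr htne |>.ne'
        have heq : (t.card : ℝ≥0∞) * ENNReal.ofReal π₀ = ENNReal.ofReal c := by
          rw [← ENNReal.ofReal_natCast, ← ENNReal.ofReal_mul (by positivity), hqπ]
        rw [heq] at hlt
        exact absurd (hAc.trans_lt (hb.trans_lt hlt)) (lt_irrefl _)
      set P : Set X := Metric.ball x₀ (d/6) ∩ Aᶜ with hP_def
      refine ⟨Fin.snoc S P, ?_, ?_, ?_⟩
      · intro i
        refine i.lastCases ?_ ?_
        · rw [Fin.snoc_last]; exact hx₀
        · intro i'; rw [Fin.snoc_castSucc]; exact hSm i'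
      · intro i
        refine i.lastCases ?_ ?_
        · rw [Fin.snoc_last]
          calc Metric.diam P ≤ Metric.diam (Metric.ball x₀ (d/6)) :=
                Metric.diam_mono Set.inter_subset_left Metric.isBounded_of_compactSpace
            _ ≤ 2 * (d/6) := Metric.diam_ball (by linarith)
            _ = d/3 := by ring
        · intro i'; rw [Fin.snoc_castSucc]; exact hSd i'
      · intro i k hik x hx z hz
        refine k.lastCases ?_ ?_ hik hx hz
        · intro hik' hx' hz'
          rw [Fin.snoc_last] at hz'
          refine i.lastCases ?_ ?_ hik' hx'
          · intro h'; exact absurd h' (lt_irrefl _)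
          · intro i' hik'' hx''
            rw [Fin.snoc_castSucc] at hx''
            have hzA : z ∈ Aᶜ := hz'.2
            have : z ∉ Metric.thickening (d/3) (S i') := fun hmem =>
              hzA (Set.mem_iUnion.mpr ⟨i', hmem⟩)
            rw [Metric.mem_thickening_iff] at this
            push_neg at this
            rw [dist_comm]
            exact this x hx''
        · intro k' hik' hx' hz'
          rw [Fin.snoc_castSucc] at hz'
          have hilt : i < Fin.castSucc k' := hik'
          have : i ≠ Fin.last j := by
            intro h
            rw [h] at hilt
            exact absurd (hilt.trans (Fin.castSucc_lt_last k')) (lt_irrefl _)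
          obtain ⟨i', rfl⟩ := Fin.exists_castSucc_eq.mpr this
          rw [Fin.snoc_castSucc] at hx'
          exact hSsep i' k' (Fin.castSucc_lt_castSucc_iff.mp hilt) x hx' z hz'
  obtain ⟨S, h1, h2, h3⟩ := key p le_rfl
  exact ⟨S, h1, h2, h3⟩
end
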